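/- For every ε with 0 < ε < ε₀ := min(1, α_min/(2ρ_max)) and every maximizer ψ of K^ε, the map e ↦ G^e_i(ψ) (with ψ fixed) is differentiable at e = ε for each i ∈ {1,…,N}, and the vector q ∈ ℝ^N with components q_i = −(d/de) G^e_i(ψ)|_{e=ε} satisfies ‖q‖ ≤ (4 ρ_max²/α_min) √N · ε. -/

import Mathlib

open MeasureTheory Real Filter Set

noncomputable section

/-- The (unrestricted) one-dimensional Laguerre cell of index `i`. -/
def Lag1 {N : ℕ} (y ψ : Fin N → ℝ) (i : Fin N) : Set ℝ :=
  {x : ℝ | ∀ j, (x - y i) ^ 2 - ψ i ≤ (x - y j) ^ 2 - ψ j}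

/-- The convex conjugate `f*` of the regularizing function `f(t) = t³/3` on `[0,1]`. -/
def fstar (t : ℝ) : ℝ :=
  if t ≤ 0 then 0 else if t ≤ 1 then (2 / 3) * t ^ ((3 : ℝ) / 2) else t - 1 / 3

/-- The rescaled conjugate `f*_ε(t) = ε² f*(t/ε²)`. -/
def fstarE (ε t : ℝ) : ℝ := ε ^ 2 * fstar (t / ε ^ 2)

/-- The regularized dual functional `K^ε`. -/
def Kreg {N : ℕ} (y α : Fin N → ℝ) (f : ℝ → ℝ) (ε : ℝ) (ψ : Fin N → ℝ) : ℝ :=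
  -(∫ x, fstarE ε (⨆ i, (ψ i - (x - y i) ^ 2)) * f x) + ∑ i, α i * ψ i

/-- The regularized mass of the `i`-th Laguerre cell,
`G^ε_i(ψ) = ∫_{Lag_i(ψ)} (f*_ε)'(ψ_i − (x−y_i)²) ρ(x) dx`. -/
def Greg {N : ℕ} (y : Fin N → ℝ) (f : ℝ → ℝ) (ε : ℝ) (ψ : Fin N → ℝ) (i : Fin N) : ℝ :=
  ∫ x in Lag1 y ψ i, min (Real.sqrt (max (ψ i - (x - y i) ^ 2) 0) / ε) 1 * f x



lemma rpow32 {t : ℝ} (ht : 0 ≤ t) : t ^ ((3:ℝ)/2) = Real.sqrt t ^ 3 := by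
  rw [Real.sqrt_eq_rpow, ← Real.rpow_natCast (t ^ ((1:ℝ)/2)) 3, ← Real.rpow_mul ht]
  norm_num

lemma fstar_eq (t : ℝ) :
    fstar t = if t ≤ 0 then 0 else if t ≤ 1 then (2/3) * (Real.sqrt t)^3 else t - 1/3 := by
  unfold fstar
  split_ifs with h1 h2
  · rfl
  · rw [rpow32 (by linarith)]
  · rfl

lemma sqrt_le_one' {t : ℝ} (h : t ≤ 1) : Real.sqrt t ≤ 1 := by
  calc Real.sqrt t ≤ Real.sqrt 1 := Real.sqrt_le_sqrt h
  _ = 1 := Real.sqrt_one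

lemma fstar_mono_lip {a b : ℝ} (hab : a ≤ b) :
    fstar a ≤ fstar b ∧ fstar b - fstar a ≤ b - a := by
  rw [fstar_eq, fstar_eq]
  rcases le_or_gt b 0 with hb | hb
  · rw [if_pos hb, if_pos (hab.trans hb)]
    exact ⟨le_refl 0, by linarith⟩
  rw [if_neg hb.not_ge]
  rcases le_or_gt b 1 with hb1 | hb1
  · rw [if_pos hb1]
    have hsb0 := Real.sqrt_nonneg b
    have hsb2 : Real.sqrt b ^ 2 = b := Real.sq_sqrt hb.le
    have hsb1 : Real.sqrt b ≤ 1 := sqrt_le_one' hb1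
    rcases le_or_gt a 0 with ha | ha
    · rw [if_pos ha]
      constructor
      · positivity
      · nlinarith
    · rw [if_neg ha.not_ge, if_pos (hab.trans hb1)]
      have hsa0 := Real.sqrt_nonneg a
      have hsa2 : Real.sqrt a ^ 2 = a := Real.sq_sqrt ha.le
      have hsab : Real.sqrt a ≤ Real.sqrt b := Real.sqrt_le_sqrt hab
      have d0 : 0 ≤ Real.sqrt b - Real.sqrt a := by linarith
      constructor
      · nlinarith
      · nlinarith [mul_nonneg d0 (mul_nonneg hsa0 (by linarith : (0:ℝ) ≤ 1 - Real.sqrt b)),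
          mul_nonneg d0 (mul_nonneg hsb0 (by linarith : (0:ℝ) ≤ 1 - Real.sqrt a)),
          mul_nonneg d0 (mul_nonneg hsa0 (by linarith : (0:ℝ) ≤ 1 - Real.sqrt a)),
          mul_nonneg d0 (mul_nonneg hsb0 (by linarith : (0:ℝ) ≤ 1 - Real.sqrt b))]
  · rw [if_neg hb1.not_ge]
    rcases le_or_gt a 0 with ha | ha
    · rw [if_pos ha]
      constructor <;> linarith
    rw [if_neg ha.not_ge]
    rcases le_or_gt a 1 with ha1 | ha1
    · rw [if_pos ha1]
      have hsa0 := Real.sqrt_nonneg a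
      have hsa2 : Real.sqrt a ^ 2 = a := Real.sq_sqrt ha.le
      have hsa1 : Real.sqrt a ≤ 1 := sqrt_le_one' ha1
      constructor
      · nlinarith
      · nlinarith [sq_nonneg (Real.sqrt a - 1), mul_nonneg (sq_nonneg (Real.sqrt a - 1)) hsa0]
    · rw [if_neg ha1.not_ge]
      constructor <;> linarith

lemma fstar_nonneg (t : ℝ) : 0 ≤ fstar t := by
  rw [fstar_eq]
  split_ifs with h1 h2
  · exact le_refl 0
  · positivity
  · push_neg at h1 h2; linarith

lemma fstar_zero_of_nonpos {t : ℝ} (ht : t ≤ 0) : fstar t = 0 := if_pos ht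

lemma fstar_continuous : Continuous fstar := by
  have : LipschitzWith 1 fstar := by
    apply LipschitzWith.of_dist_le_mul
    intro a b
    simp only [Real.dist_eq, NNReal.coe_one, one_mul]
    rcases le_total a b with h | h
    · have h1 := (fstar_mono_lip h).1
      have h2 := (fstar_mono_lip h).2
      rw [abs_sub_comm (fstar a), abs_of_nonneg (by linarith), abs_sub_comm a,
        abs_of_nonneg (by linarith)]
      linarith
    · have h1 := (fstar_mono_lip h).1
      have h2 := (fstar_mono_lip h).2
      rw [abs_of_nonneg (by linarith), abs_of_nonneg (by linarith)]
      linarith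
  exact this.continuous

section FE

variable {ε : ℝ} (hε : 0 < ε)
include hε

lemma fstarE_nonneg (t : ℝ) : 0 ≤ fstarE ε t :=
  mul_nonneg (sq_nonneg ε) (fstar_nonneg _)

lemma fstarE_zero_of_nonpos {t : ℝ} (ht : t ≤ 0) : fstarE ε t = 0 := by
  rw [fstarE, fstar_zero_of_nonpos (div_nonpos_of_nonpos_of_nonneg ht (sq_nonneg ε)), mul_zero]

lemma fstarE_mono {a b : ℝ} (hab : a ≤ b) : fstarE ε a ≤ fstarE ε b := by
  have h2 : (0:ℝ) < ε ^ 2 := by positivity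
  exact mul_le_mul_of_nonneg_left
    (fstar_mono_lip (div_le_div_of_nonneg_right hab h2.le)).1 h2.le

lemma fstarE_lip {a b : ℝ} (hab : a ≤ b) : fstarE ε b - fstarE ε a ≤ b - a := by
  have h2 : (0:ℝ) < ε ^ 2 := by positivity
  have := (fstar_mono_lip (show a / ε^2 ≤ b / ε^2 from div_le_div_of_nonneg_right hab h2.le)).2
  have h3 : ε^2 * (fstar (b/ε^2) - fstar (a/ε^2)) ≤ ε^2 * (b/ε^2 - a/ε^2) :=
    mul_le_mul_of_nonneg_left this h2.le
  have h4 : ε^2 * (b/ε^2 - a/ε^2) = b - a := by field_simp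
  rw [fstarE, fstarE]
  nlinarith

lemma fstarE_continuous : Continuous (fstarE ε) :=
  continuous_const.mul (fstar_continuous.comp (continuous_id.div_const _))

end FE

section SupLemmas
variable {N : ℕ} [Nonempty (Fin N)]

lemma sup_continuous (φ g : Fin N → ℝ) :
    Continuous (fun x : ℝ => ⨆ j, (φ j - (x - g j) ^ 2)) := by
  have h : (fun x : ℝ => ⨆ j, (φ j - (x - g j) ^ 2)) =
      fun x => Finset.univ.sup' Finset.univ_nonempty (fun j => φ j - (x - g j) ^ 2) := by
    funext x
    rw [Finset.sup'_univ_eq_ciSup]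
  rw [h]
  exact Continuous.finset_sup'_apply _ fun j _ => by continuity

lemma le_sup (φ g : Fin N → ℝ) (x : ℝ) (i : Fin N) :
    φ i - (x - g i) ^ 2 ≤ ⨆ j, (φ j - (x - g j) ^ 2) :=
  le_ciSup (f := fun j => φ j - (x - g j) ^ 2) (Set.finite_range _).bddAbove i

lemma sup_update (ψ : Fin N → ℝ) (g : ℝ → Fin N → ℝ) (i : Fin N) (t : ℝ) (ht : 0 ≤ t) (x : ℝ) :
    (⨆ j, (Function.update ψ i (ψ i + t) j - (x - g x j) ^ 2)) =
      max (ψ i + t - (x - g x i) ^ 2) (⨆ j, (ψ j - (x - g x j) ^ 2)) := by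
  apply le_antisymm
  · apply ciSup_le
    intro j
    rcases eq_or_ne j i with rfl | h
    · rw [Function.update_self]
      exact le_max_left _ _
    · rw [Function.update_of_ne h]
      exact le_max_of_le_right
        (le_ciSup (f := fun k => ψ k - (x - g x k) ^ 2) (Set.finite_range _).bddAbove j)
  · apply max_le
    · have h := le_ciSup (f := fun j => Function.update ψ i (ψ i + t) j - (x - g x j) ^ 2)
        (Set.finite_range _).bddAbove i
      rwa [Function.update_self] at h
    · apply ciSup_le
      intro j
      rcases eq_or_ne j i with rfl | h
      · have h := le_ciSup (f := fun k => Function.update ψ j (ψ j + t) k - (x - g x k) ^ 2)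
          (Set.finite_range _).bddAbove j
        rw [Function.update_self] at h
        exact le_trans (by linarith) h
      · have h2 := le_ciSup (f := fun k => Function.update ψ i (ψ i + t) k - (x - g x k) ^ 2)
          (Set.finite_range _).bddAbove j
        rwa [Function.update_of_ne h] at h2

end SupLemmas

section Density
variable {c e ρmin ρmax : ℝ} {f : ℝ → ℝ}
  (hce : c < e) (hfm : Measurable f) (hf0 : ∀ x, 0 ≤ f x)
  (hsupp : ∀ x, x ∉ Set.Icc c e → f x = 0)
  (hρmin : 0 < ρmin) (hρ : ρmin ≤ ρmax)
  (hbd : ∀ x ∈ Set.Icc c e, ρmin ≤ f x ∧ f x ≤ ρmax)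

include hsupp hρmin hρ hbd in
lemma f_le_rhomax : ∀ x, f x ≤ ρmax := by
  intro x
  by_cases hx : x ∈ Set.Icc c e
  · exact (hbd x hx).2
  · rw [hsupp x hx]; linarith

include hce hfm hf0 hsupp hρmin hρ hbd in
lemma integrable_mul_f (G : ℝ → ℝ) (hG : Continuous G) :
    Integrable (fun x => G x * f x) := by
  obtain ⟨C, hC⟩ := isCompact_Icc.exists_bound_of_continuousOn (s := Set.Icc c e)
    hG.continuousOn
  have hC0 : 0 ≤ C := le_trans (norm_nonneg _) (hC c (Set.mem_Icc.2 ⟨le_refl c, hce.le⟩))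
  have hρmax : 0 < ρmax := lt_of_lt_of_le hρmin hρ
  refine Integrable.mono' (g := fun x => Set.indicator (Set.Icc c e) (fun _ => C * ρmax) x)
    ?_ ?_ ?_
  · rw [integrable_indicator_iff measurableSet_Icc]
    exact integrableOn_const measure_Icc_lt_top.ne
  · exact (hG.measurable.mul hfm).aestronglyMeasurable
  · apply Filter.Eventually.of_forall
    intro x
    simp only [Set.indicator_apply]
    by_cases hx : x ∈ Set.Icc c e
    · rw [if_pos hx]
      rw [Real.norm_eq_abs, abs_mul, abs_of_nonneg (hf0 x)]
      have h1 : |G x| ≤ C := by simpa [Real.norm_eq_abs] using hC x hx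
      exact mul_le_mul h1 (hbd x hx).2 (hf0 x) hC0
    · rw [if_neg hx, hsupp x hx, mul_zero, norm_zero]

end Density


section Step1
variable {N : ℕ} {c e ρmin ρmax : ℝ} {f : ℝ → ℝ}

lemma psi_lb (hce : c < e) (hfm : Measurable f) (hf0 : ∀ x, 0 ≤ f x)
    (hsupp : ∀ x, x ∉ Set.Icc c e → f x = 0)
    (hρmin : 0 < ρmin) (hρ : ρmin ≤ ρmax)
    (hbd : ∀ x ∈ Set.Icc c e, ρmin ≤ f x ∧ f x ≤ ρmax)
    (y α ψ : Fin N → ℝ) (hα : ∀ i, 0 < α i)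
    {ε : ℝ} (hε : 0 < ε) (hm : IsMaxOn (Kreg y α f ε) Set.univ ψ) (i : Fin N) :
    (α i / (2 * ρmax)) ^ 2 ≤ ψ i := by
  haveI : Nonempty (Fin N) := ⟨i⟩
  have hρmax : 0 < ρmax := lt_of_lt_of_le hρmin hρ
  apply le_of_forall_pos_le_add
  intro t ht
  have hK := hm (Set.mem_univ (Function.update ψ i (ψ i + t)))
  simp only [Kreg, Set.mem_setOf_eq] at hK
  have hsum : ∑ j, α j * Function.update ψ i (ψ i + t) j = α i * t + ∑ j, α j * ψ j := by
    have h : ∀ j : Fin N, α j * Function.update ψ i (ψ i + t) j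
        = (if j = i then α i * t else 0) + α j * ψ j := by
      intro j
      rcases eq_or_ne j i with rfl | h
      · rw [Function.update_self, if_pos rfl]; ring
      · rw [Function.update_of_ne h, if_neg h]; ring
    simp_rw [h, Finset.sum_add_distrib, Finset.sum_ite_eq' Finset.univ i
      (fun _ => α i * t)]
    simp
  have hIt : Integrable (fun x =>
      fstarE ε (⨆ j, (Function.update ψ i (ψ i + t) j - (x - y j) ^ 2)) * f x) :=
    integrable_mul_f hce hfm hf0 hsupp hρmin hρ hbd _
      ((fstarE_continuous hε).comp (sup_continuous _ y))
  have hI : Integrable (fun x => fstarE ε (⨆ j, (ψ j - (x - y j) ^ 2)) * f x) :=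
    integrable_mul_f hce hfm hf0 hsupp hρmin hρ hbd _
      ((fstarE_continuous hε).comp (sup_continuous _ y))
  have key : α i * t ≤
      (∫ x, fstarE ε (⨆ j, (Function.update ψ i (ψ i + t) j - (x - y j) ^ 2)) * f x)
      - ∫ x, fstarE ε (⨆ j, (ψ j - (x - y j) ^ 2)) * f x := by
    rw [hsum] at hK
    linarith
  rw [← integral_sub hIt hI] at key
  set v := Real.sqrt (ψ i + t) with hv
  have hv0 : 0 ≤ v := Real.sqrt_nonneg _
  have hb_int : Integrable (fun x =>
      Set.indicator (Set.Ioo (y i - v) (y i + v)) (fun _ => t * ρmax) x) := by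
    rw [integrable_indicator_iff measurableSet_Ioo]
    exact integrableOn_const measure_Ioo_lt_top.ne
  have hpt : ∀ x : ℝ,
      fstarE ε (⨆ j, (Function.update ψ i (ψ i + t) j - (x - y j) ^ 2)) * f x
        - fstarE ε (⨆ j, (ψ j - (x - y j) ^ 2)) * f x
      ≤ Set.indicator (Set.Ioo (y i - v) (y i + v)) (fun _ => t * ρmax) x := by
    intro x
    have hid := sup_update ψ (fun _ => y) i t ht.le x
    rw [hid]
    set S := ⨆ j, (ψ j - (x - y j) ^ 2) with hS
    have hind0 : 0 ≤ Set.indicator (Set.Ioo (y i - v) (y i + v)) (fun _ => t * ρmax) x :=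
      Set.indicator_nonneg (fun _ _ => by positivity) x
    by_cases hx : 0 < ψ i + t - (x - y i) ^ 2
    · have hv2 : v ^ 2 = ψ i + t := Real.sq_sqrt (by nlinarith [sq_nonneg (x - y i)])
      have habs : |x - y i| < v := by
        rw [← Real.sqrt_sq_eq_abs, hv]
        exact Real.sqrt_lt_sqrt (sq_nonneg _) (by linarith)
      have hmem : x ∈ Set.Ioo (y i - v) (y i + v) := by
        have h1 := (abs_lt.1 habs).1
        have h2 := (abs_lt.1 habs).2
        constructor <;> [linarith; linarith]
      rw [Set.indicator_of_mem hmem]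
      have hPle : ψ i - (x - y i) ^ 2 ≤ S := le_sup ψ y x i
      have hlip := fstarE_lip hε (le_max_right (ψ i + t - (x - y i) ^ 2) S)
      have hle : max (ψ i + t - (x - y i) ^ 2) S ≤ S + t :=
        max_le (by linarith) (by linarith)
      have h1 : fstarE ε (max (ψ i + t - (x - y i) ^ 2) S) - fstarE ε S ≤ t := by linarith
      have h0 : 0 ≤ fstarE ε (max (ψ i + t - (x - y i) ^ 2) S) - fstarE ε S :=
        sub_nonneg.2 (fstarE_mono hε (le_max_right _ _))
      calc fstarE ε (max (ψ i + t - (x - y i) ^ 2) S) * f x - fstarE ε S * f x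
          = (fstarE ε (max (ψ i + t - (x - y i) ^ 2) S) - fstarE ε S) * f x := by ring
        _ ≤ t * ρmax :=
            mul_le_mul h1 (f_le_rhomax hsupp hρmin hρ hbd x) (hf0 x) ht.le
    · push_neg at hx
      rcases le_or_gt (ψ i + t - (x - y i) ^ 2) S with h1 | h1
      · rw [max_eq_right h1]
        simpa using hind0
      · rw [max_eq_left h1.le, fstarE_zero_of_nonpos hε hx,
          fstarE_zero_of_nonpos hε (by linarith : S ≤ 0)]
        simpa using hind0
  have key2 := key.trans (integral_mono (hIt.sub hI) hb_int hpt)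
  rw [integral_indicator_const _ measurableSet_Ioo] at key2
  rw [Real.volume_real_Ioo_of_le (by linarith), show (y i + v) - (y i - v) = 2 * v by ring,
    smul_eq_mul] at key2
  have hqv : α i ≤ 2 * ρmax * v :=
    le_of_mul_le_mul_right (by linarith) ht
  have hppos : 0 ≤ ψ i + t := by
    by_contra h
    push_neg at h
    have hvz : v = 0 := by rw [hv]; exact Real.sqrt_eq_zero'.2 h.le
    rw [hvz] at hqv
    have := hα i
    linarith
  have hsq : v ^ 2 = ψ i + t := Real.sq_sqrt hppos
  have hfrac : α i / (2 * ρmax) ≤ v :=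
    (div_le_iff₀ (by linarith : (0:ℝ) < 2 * ρmax)).2 (by linarith)
  have := pow_le_pow_left₀ (le_of_lt (div_pos (hα i) (by linarith))) hfrac 2
  linarith

end Step1


def sfun {N : ℕ} (y ψ : Fin N → ℝ) (i : Fin N) (a : ℝ) : ℝ :=
  Real.sqrt (max (ψ i - (a - y i) ^ 2) 0)

def Fd {N : ℕ} (f : ℝ → ℝ) (y ψ : Fin N → ℝ) (i : Fin N) (t a : ℝ) : ℝ :=
  min (sfun y ψ i a / t) 1 * f a

def Fd' {N : ℕ} (f : ℝ → ℝ) (y ψ : Fin N → ℝ) (i : Fin N) (ε a : ℝ) : ℝ :=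
  (if sfun y ψ i a < ε then -(sfun y ψ i a / ε ^ 2) else 0) * f a

lemma Fd_def {N : ℕ} (f : ℝ → ℝ) (y ψ : Fin N → ℝ) (i : Fin N) (t a : ℝ) :
    Fd f y ψ i t a = min (sfun y ψ i a / t) 1 * f a := rfl

lemma Fd'_def {N : ℕ} (f : ℝ → ℝ) (y ψ : Fin N → ℝ) (i : Fin N) (ε a : ℝ) :
    Fd' f y ψ i ε a = (if sfun y ψ i a < ε then -(sfun y ψ i a / ε ^ 2) else 0) * f a := rfl

section KeyDeriv
variable {N : ℕ} {c e ρmin ρmax : ℝ} {f : ℝ → ℝ}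

set_option maxHeartbeats 1000000 in
lemma key_deriv (hce : c < e) (hfm : Measurable f) (hf0 : ∀ x, 0 ≤ f x)
    (hsupp : ∀ x, x ∉ Set.Icc c e → f x = 0)
    (hρmin : 0 < ρmin) (hρ : ρmin ≤ ρmax)
    (hbd : ∀ x ∈ Set.Icc c e, ρmin ≤ f x ∧ f x ≤ ρmax)
    (y ψ : Fin N → ℝ) (i : Fin N) {ε αm : ℝ} (hε : 0 < ε) (hαm : 0 < αm)
    (hψ1 : ε ^ 2 < ψ i) (hψ2 : αm / (2 * ρmax) ≤ Real.sqrt (ψ i)) :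
    ∃ d : ℝ,
      HasDerivAt (fun t : ℝ =>
        ∫ x in Lag1 y ψ i, min (Real.sqrt (max (ψ i - (x - y i) ^ 2) 0) / t) 1 * f x) d ε ∧
      |d| ≤ 4 * ρmax ^ 2 / αm * ε := by
  have hρmax : 0 < ρmax := lt_of_lt_of_le hρmin hρ
  have hψ0 : (0:ℝ) ≤ ψ i := le_trans (sq_nonneg ε) hψ1.le
  have hf_int : Integrable f := by
    simpa using integrable_mul_f hce hfm hf0 hsupp hρmin hρ hbd (fun _ => (1:ℝ))
      continuous_const
  have hfle : ∀ x, f x ≤ ρmax := f_le_rhomax hsupp hρmin hρ hbd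
  have hLag : MeasurableSet (Lag1 y ψ i) := by
    have hsub : Lag1 y ψ i = ⋂ j, {x : ℝ | (x - y i) ^ 2 - ψ i ≤ (x - y j) ^ 2 - ψ j} := by
      ext x
      simp [Lag1, Set.mem_iInter]
    rw [hsub]
    exact MeasurableSet.iInter fun j =>
      measurableSet_le (by fun_prop) (by fun_prop)
  set μi := volume.restrict (Lag1 y ψ i) with hμi
  have hs_cont : Continuous (sfun y ψ i) := by
    apply Continuous.sqrt
    exact (continuous_const.sub ((continuous_id.sub continuous_const).pow 2)).max
      continuous_const
  have hs_nonneg : ∀ a, 0 ≤ sfun y ψ i a := fun a => Real.sqrt_nonneg _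
  have hs_le : ∀ a, sfun y ψ i a ≤ Real.sqrt (ψ i) := by
    intro a
    apply Real.sqrt_le_sqrt
    exact max_le (by nlinarith [sq_nonneg (a - y i)]) hψ0
  -- apply dominated differentiation
  have hmeas : ∀ᶠ t in nhds ε, AEStronglyMeasurable (Fd f y ψ i t) μi := by
    apply Filter.Eventually.of_forall
    intro t
    exact (((hs_cont.div_const t).min continuous_const).measurable.mul hfm).aestronglyMeasurable
  have hFint : Integrable (Fd f y ψ i ε) μi := by
    apply Integrable.mono' (hf_int.restrict (s := Lag1 y ψ i))
      (((hs_cont.div_const ε).min continuous_const).measurable.mul hfm).aestronglyMeasurable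
    apply Filter.Eventually.of_forall
    intro a
    rw [Real.norm_eq_abs]
    show |min (sfun y ψ i a / ε) 1 * f a| ≤ f a
    rw [abs_mul, abs_of_nonneg (hf0 a)]
    have h1 : |min (sfun y ψ i a / ε) 1| ≤ 1 := by
      rw [abs_of_nonneg (le_min (div_nonneg (hs_nonneg a) hε.le) zero_le_one)]
      exact min_le_right _ _
    nlinarith [hf0 a]
  have hF'meas : AEStronglyMeasurable (Fd' f y ψ i ε) μi := by
    apply Measurable.aestronglyMeasurable
    apply Measurable.mul _ hfm
    exact Measurable.ite (measurableSet_lt hs_cont.measurable measurable_const)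
      ((hs_cont.measurable.div_const _).neg) measurable_const
  have hbound_nonneg : ∀ a, 0 ≤ 4 * Real.sqrt (ψ i) / ε ^ 2 * f a := by
    intro a
    have := Real.sqrt_nonneg (ψ i)
    have := hf0 a
    positivity
  have hlip : ∀ᵐ a ∂μi, LipschitzOnWith (Real.nnabs (4 * Real.sqrt (ψ i) / ε ^ 2 * f a))
      (fun t => Fd f y ψ i t a) (Metric.ball ε (ε / 2)) := by
    apply Filter.Eventually.of_forall
    intro a
    apply LipschitzOnWith.of_dist_le_mul
    intro t1 ht1 t2 ht2
    have h1 : ε / 2 < t1 := by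
      have := Metric.mem_ball.1 ht1
      rw [Real.dist_eq, abs_lt] at this
      linarith [this.1]
    have h2 : ε / 2 < t2 := by
      have := Metric.mem_ball.1 ht2
      rw [Real.dist_eq, abs_lt] at this
      linarith [this.1]
    have ht1p : 0 < t1 := by linarith
    have ht2p : 0 < t2 := by linarith
    rw [Real.dist_eq, Real.dist_eq]
    have hmin : |min (sfun y ψ i a / t1) 1 - min (sfun y ψ i a / t2) 1|
        ≤ |sfun y ψ i a / t1 - sfun y ψ i a / t2| := by
      simpa using abs_min_sub_min_le_max (sfun y ψ i a / t1) 1 (sfun y ψ i a / t2) 1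
    have hdiv : |sfun y ψ i a / t1 - sfun y ψ i a / t2|
        ≤ 4 * Real.sqrt (ψ i) / ε ^ 2 * |t1 - t2| := by
      have hq : sfun y ψ i a / t1 - sfun y ψ i a / t2
          = sfun y ψ i a * (t2 - t1) / (t1 * t2) := by
        field_simp
      rw [hq, abs_div, abs_mul, abs_of_nonneg (hs_nonneg a),
        abs_of_pos (mul_pos ht1p ht2p), div_le_iff₀ (mul_pos ht1p ht2p)]
      have h0 : ε ^ 2 / 4 ≤ t1 * t2 := by nlinarith
      calc sfun y ψ i a * |t2 - t1| ≤ Real.sqrt (ψ i) * |t1 - t2| := by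
            rw [abs_sub_comm]
            exact mul_le_mul_of_nonneg_right (hs_le a) (abs_nonneg _)
        _ = 4 * Real.sqrt (ψ i) / ε ^ 2 * |t1 - t2| * (ε ^ 2 / 4) := by
            field_simp
        _ ≤ 4 * Real.sqrt (ψ i) / ε ^ 2 * |t1 - t2| * (t1 * t2) := by
            apply mul_le_mul_of_nonneg_left h0
            have := Real.sqrt_nonneg (ψ i)
            positivity
    calc |Fd f y ψ i t1 a - Fd f y ψ i t2 a|
        = |min (sfun y ψ i a / t1) 1 - min (sfun y ψ i a / t2) 1| * f a := by
          rw [show Fd f y ψ i t1 a - Fd f y ψ i t2 a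
            = (min (sfun y ψ i a / t1) 1 - min (sfun y ψ i a / t2) 1) * f a from by
              rw [Fd_def, Fd_def]; ring, abs_mul, abs_of_nonneg (hf0 a)]
      _ ≤ 4 * Real.sqrt (ψ i) / ε ^ 2 * |t1 - t2| * f a :=
          mul_le_mul_of_nonneg_right (hmin.trans hdiv) (hf0 a)
      _ = (4 * Real.sqrt (ψ i) / ε ^ 2 * f a) * |t1 - t2| := by ring
      _ = (Real.nnabs (4 * Real.sqrt (ψ i) / ε ^ 2 * f a) : ℝ) * |t1 - t2| := by
          rw [Real.coe_nnabs, abs_of_nonneg (hbound_nonneg a)]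
  have hbint : Integrable (fun a => 4 * Real.sqrt (ψ i) / ε ^ 2 * f a) μi :=
    (hf_int.const_mul _).restrict
  have hdiff : ∀ᵐ a ∂μi, HasDerivAt (fun t => Fd f y ψ i t a) (Fd' f y ψ i ε a) ε := by
    have hne : ∀ᵐ a : ℝ, sfun y ψ i a ≠ ε := by
      rw [ae_iff]
      have hfin : Set.Finite {a : ℝ | sfun y ψ i a = ε} := by
        apply Set.Finite.subset
          ((Set.finite_singleton (y i - Real.sqrt (ψ i - ε ^ 2))).insert
            (y i + Real.sqrt (ψ i - ε ^ 2)))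
        intro a ha
        simp only [Set.mem_setOf_eq] at ha
        have hsq : max (ψ i - (a - y i) ^ 2) 0 = ε ^ 2 := by
          have h0 : sfun y ψ i a ^ 2 = max (ψ i - (a - y i) ^ 2) 0 :=
            Real.sq_sqrt (le_max_right _ _)
          rw [ha] at h0
          exact h0.symm
        have hP : ψ i - (a - y i) ^ 2 = ε ^ 2 := by
          rcases le_or_gt (ψ i - (a - y i) ^ 2) 0 with h | h
          · rw [max_eq_right h] at hsq
            nlinarith
          · rwa [max_eq_left h.le] at hsq
        have hu2 : (a - y i) ^ 2 = Real.sqrt (ψ i - ε ^ 2) ^ 2 := by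
          rw [Real.sq_sqrt (by linarith : (0:ℝ) ≤ ψ i - ε ^ 2)]
          linarith
        have habs : |a - y i| = Real.sqrt (ψ i - ε ^ 2) := by
          rw [← Real.sqrt_sq_eq_abs, hu2, Real.sqrt_sq (Real.sqrt_nonneg _)]
        rcases abs_eq (Real.sqrt_nonneg (ψ i - ε ^ 2)) |>.1 habs with h | h
        · exact Set.mem_insert_iff.2 (Or.inl (by linarith))
        · exact Set.mem_insert_iff.2 (Or.inr (Set.mem_singleton_iff.2 (by linarith)))
      have := hfin.measure_zero volume
      simpa using this
    apply Filter.Eventually.filter_mono (ae_mono Measure.restrict_le_self)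
    apply hne.mono
    intro a ha
    rcases lt_or_gt_of_ne ha with hlt | hgt
    · have hF'eq : Fd' f y ψ i ε a = -(sfun y ψ i a / ε ^ 2) * f a := by
        rw [Fd'_def, if_pos hlt]
      rw [hF'eq]
      have hεa : HasDerivAt (fun t : ℝ => sfun y ψ i a / t * f a)
          (-(sfun y ψ i a / ε ^ 2) * f a) ε := by
        have h := ((hasDerivAt_inv (ne_of_gt hε)).const_mul (sfun y ψ i a)).mul_const (f a)
        simp only [div_eq_mul_inv]
        rw [show -(sfun y ψ i a * (ε ^ 2)⁻¹) * f a = sfun y ψ i a * -(ε ^ 2)⁻¹ * f a by ring]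
        exact h
      apply hεa.congr_of_eventuallyEq
      filter_upwards [isOpen_Ioi.mem_nhds (show sfun y ψ i a < ε from hlt)] with t ht
      have ht0 : 0 < t := lt_of_le_of_lt (hs_nonneg a) ht
      rw [Fd_def, min_eq_left ((div_le_one ht0).2 (le_of_lt ht))]
    · have hF'eq : Fd' f y ψ i ε a = 0 := by
        rw [Fd'_def, if_neg (not_lt.2 hgt.le), zero_mul]
      rw [hF'eq]
      apply (hasDerivAt_const ε (f a)).congr_of_eventuallyEq
      filter_upwards [isOpen_Ioo.mem_nhds (show ε ∈ Set.Ioo 0 (sfun y ψ i a) from ⟨hε, hgt⟩)]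
        with t ht
      rw [Fd_def, min_eq_right ((one_le_div ht.1).2 ht.2.le), one_mul]
  obtain ⟨hF'int, hderiv⟩ := hasDerivAt_integral_of_dominated_loc_of_lip
    (Metric.ball_mem_nhds ε (show (0:ℝ) < ε / 2 by positivity)) hmeas hFint hF'meas hlip hbint hdiff
  refine ⟨∫ a, Fd' f y ψ i ε a ∂μi, hderiv, ?_⟩
  set u₀ := Real.sqrt (ψ i - ε ^ 2) with hu₀
  set v₀ := Real.sqrt (ψ i) with hv₀
  have hu0 : 0 ≤ u₀ := Real.sqrt_nonneg _
  have hv0 : 0 < v₀ := lt_of_lt_of_le (div_pos hαm (by linarith)) hψ2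
  have huv : u₀ ≤ v₀ := Real.sqrt_le_sqrt (by nlinarith [sq_nonneg ε])
  have hu2 : u₀ ^ 2 = ψ i - ε ^ 2 := Real.sq_sqrt (by linarith)
  have hv2 : v₀ ^ 2 = ψ i := Real.sq_sqrt hψ0
  have hεne : ε ≠ 0 := hε.ne'
  have hαmne : αm ≠ 0 := hαm.ne'
  set I1 := Set.Ioo (y i - v₀) (y i - u₀) with hI1
  set I2 := Set.Ioo (y i + u₀) (y i + v₀) with hI2
  have hρε : (0:ℝ) ≤ ρmax / ε := div_nonneg hρmax.le hε.le
  have h1int : Integrable (fun a => Set.indicator I1 (fun _ => ρmax / ε) a) := by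
    rw [integrable_indicator_iff measurableSet_Ioo]
    exact integrableOn_const measure_Ioo_lt_top.ne
  have h2int : Integrable (fun a => Set.indicator I2 (fun _ => ρmax / ε) a) := by
    rw [integrable_indicator_iff measurableSet_Ioo]
    exact integrableOn_const measure_Ioo_lt_top.ne
  have hb2int : Integrable (fun a =>
      Set.indicator I1 (fun _ => ρmax / ε) a + Set.indicator I2 (fun _ => ρmax / ε) a) :=
    h1int.add h2int
  have hb2nonneg : ∀ a : ℝ,
      0 ≤ Set.indicator I1 (fun _ => ρmax / ε) a + Set.indicator I2 (fun _ => ρmax / ε) a :=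
    fun a => add_nonneg (Set.indicator_nonneg (fun _ _ => hρε) a)
      (Set.indicator_nonneg (fun _ _ => hρε) a)
  have hptw : ∀ a : ℝ, |Fd' f y ψ i ε a| ≤
      Set.indicator I1 (fun _ => ρmax / ε) a + Set.indicator I2 (fun _ => ρmax / ε) a := by
    intro a
    rw [Fd'_def]
    by_cases hcase : sfun y ψ i a < ε
    · rw [if_pos hcase, abs_mul, abs_neg,
        abs_of_nonneg (div_nonneg (hs_nonneg a) (sq_nonneg ε)), abs_of_nonneg (hf0 a)]
      by_cases h0 : 0 < ψ i - (a - y i) ^ 2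
      · have hP : sfun y ψ i a ^ 2 = ψ i - (a - y i) ^ 2 := by
          have h1 : sfun y ψ i a ^ 2 = max (ψ i - (a - y i) ^ 2) 0 :=
            Real.sq_sqrt (le_max_right _ _)
          rwa [max_eq_left h0.le] at h1
        have hlt2 : ψ i - (a - y i) ^ 2 < ε ^ 2 := by nlinarith [hs_nonneg a]
        have habs1 : |a - y i| < v₀ := by
          rw [← Real.sqrt_sq_eq_abs, hv₀]
          exact Real.sqrt_lt_sqrt (sq_nonneg _) (by linarith)
        have habs2 : u₀ < |a - y i| := by
          rw [← Real.sqrt_sq_eq_abs, hu₀]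
          exact Real.sqrt_lt_sqrt (by linarith) (by linarith)
        have hval : sfun y ψ i a / ε ^ 2 * f a ≤ ρmax / ε := by
          have h3 : sfun y ψ i a / ε ^ 2 ≤ 1 / ε := by
            rw [div_le_div_iff₀ (by positivity) hε]
            nlinarith [hcase.le]
          calc sfun y ψ i a / ε ^ 2 * f a ≤ (1 / ε) * ρmax :=
                mul_le_mul h3 (hfle a) (hf0 a) (by positivity)
            _ = ρmax / ε := by ring
        rcases le_or_gt 0 (a - y i) with hsign | hsign
        · have hmem : a ∈ I2 := by
            rw [abs_of_nonneg hsign] at habs1 habs2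
            exact ⟨by linarith, by linarith⟩
          have h4 : Set.indicator I2 (fun _ => ρmax / ε) a = ρmax / ε :=
            Set.indicator_of_mem hmem _
          have h5 : 0 ≤ Set.indicator I1 (fun _ => ρmax / ε) a :=
            Set.indicator_nonneg (fun _ _ => hρε) a
          linarith [hval]
        · have hmem : a ∈ I1 := by
            rw [abs_of_neg hsign] at habs1 habs2
            exact ⟨by linarith, by linarith⟩
          have h4 : Set.indicator I1 (fun _ => ρmax / ε) a = ρmax / ε :=
            Set.indicator_of_mem hmem _
          have h5 : 0 ≤ Set.indicator I2 (fun _ => ρmax / ε) a :=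
            Set.indicator_nonneg (fun _ _ => hρε) a
          linarith [hval]
      · push_neg at h0
        have hs0 : sfun y ψ i a = 0 := by
          have h1 : sfun y ψ i a = Real.sqrt (max (ψ i - (a - y i) ^ 2) 0) := rfl
          rw [h1, max_eq_right h0, Real.sqrt_zero]
        rw [hs0]
        simpa using hb2nonneg a
    · rw [if_neg hcase, zero_mul, abs_zero]
      exact hb2nonneg a
  have hchain : |∫ a, Fd' f y ψ i ε a ∂μi| ≤
      (ρmax / ε) * (v₀ - u₀) + (ρmax / ε) * (v₀ - u₀) := by
    calc |∫ a, Fd' f y ψ i ε a ∂μi| ≤ ∫ a, |Fd' f y ψ i ε a| ∂μi := by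
          simpa [Real.norm_eq_abs] using
            norm_integral_le_integral_norm (μ := μi) (Fd' f y ψ i ε)
      _ ≤ ∫ a, (Set.indicator I1 (fun _ => ρmax / ε) a
            + Set.indicator I2 (fun _ => ρmax / ε) a) ∂μi :=
          integral_mono hF'int.abs hb2int.restrict hptw
      _ ≤ ∫ a, (Set.indicator I1 (fun _ => ρmax / ε) a
            + Set.indicator I2 (fun _ => ρmax / ε) a) :=
          integral_mono_measure Measure.restrict_le_self
            (Filter.Eventually.of_forall hb2nonneg) hb2int
      _ = (ρmax / ε) * (v₀ - u₀) + (ρmax / ε) * (v₀ - u₀) := by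
          rw [integral_add h1int h2int, integral_indicator_const _ measurableSet_Ioo,
            integral_indicator_const _ measurableSet_Ioo, Real.volume_real_Ioo_of_le (by linarith),
            Real.volume_real_Ioo_of_le (by linarith), show (y i - u₀) - (y i - v₀) = v₀ - u₀ by ring,
            show (y i + v₀) - (y i + u₀) = v₀ - u₀ by ring]
          simp only [smul_eq_mul]
          ring
  have hdiff2 : (v₀ - u₀) * (v₀ + u₀) = ε ^ 2 := by linear_combination hv2 - hu2
  have hsum_pos : 0 < v₀ + u₀ := by linarith
  have hvu : v₀ - u₀ ≤ 2 * ρmax * ε ^ 2 / αm := by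
    have heq : v₀ - u₀ = ε ^ 2 / (v₀ + u₀) := by
      field_simp
      linarith [hdiff2]
    rw [heq]
    calc ε ^ 2 / (v₀ + u₀) ≤ ε ^ 2 / (αm / (2 * ρmax)) :=
          div_le_div_of_nonneg_left (sq_nonneg ε) (div_pos hαm (by linarith)) (by linarith)
      _ = 2 * ρmax * ε ^ 2 / αm := by
          rw [div_div_eq_mul_div]
          ring
  calc |∫ a, Fd' f y ψ i ε a ∂μi| ≤ (ρmax / ε) * (v₀ - u₀) + (ρmax / ε) * (v₀ - u₀) := hchain
    _ = 2 * (ρmax / ε) * (v₀ - u₀) := by ring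
    _ ≤ 2 * (ρmax / ε) * (2 * ρmax * ε ^ 2 / αm) := by
        apply mul_le_mul_of_nonneg_left hvu (by linarith)
    _ = 4 * ρmax ^ 2 / αm * ε := by
        field_simp
        ring

end KeyDeriv

lemma div_le_div_of_nonneg_right' {a b c : ℝ} (hab : a ≤ b) (hc : 0 < c) :
    a / c ≤ b / c := by
  rw [div_le_div_iff₀ hc hc]
  nlinarith

set_option maxHeartbeats 1000000 in
/-- for `0 < ε < ε₀ = min(1, α_min/(2ρ_max))` and `ψ` a maximizer of
`K^ε`, the map `e ↦ G^e_i(ψ)` is differentiable at `e = ε` for each `i`, and the vector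
`q` with `q_i = −(d/de) G^e_i(ψ)|_{e=ε}` satisfies `‖q‖ ≤ (4ρ_max²/α_min) √N ε`. -/
theorem stmt13 {N : ℕ} (hN : 0 < N) (c e ρmin ρmax : ℝ) (hce : c < e)
    (f : ℝ → ℝ) (hfm : Measurable f) (hf0 : ∀ x, 0 ≤ f x)
    (hsupp : ∀ x, x ∉ Set.Icc c e → f x = 0)
    (hcont : ContinuousOn f (Set.Icc c e))
    (hρmin : 0 < ρmin) (hρ : ρmin ≤ ρmax)
    (hbd : ∀ x ∈ Set.Icc c e, ρmin ≤ f x ∧ f x ≤ ρmax)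
    (hint : ∫ x, f x = 1)
    (y : Fin N → ℝ) (hy : StrictMono y)
    (α : Fin N → ℝ) (hα : ∀ i, 0 < α i) (hαs : ∑ i, α i < 1)
    (ε : ℝ) (hε : 0 < ε) (hε0 : ε < min 1 ((⨅ j, α j) / (2 * ρmax)))
    (ψ : Fin N → ℝ) (hm : IsMaxOn (Kreg y α f ε) Set.univ ψ) :
    ∃ q : Fin N → ℝ,
      (∀ i, HasDerivAt (fun ε' : ℝ => Greg y f ε' ψ i) (-(q i)) ε) ∧
      Real.sqrt (∑ i, (q i) ^ 2) ≤
        4 * ρmax ^ 2 / (⨅ j, α j) * Real.sqrt (N : ℝ) * ε := by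
  haveI : Nonempty (Fin N) := ⟨⟨0, hN⟩⟩
  have hρmax : 0 < ρmax := lt_of_lt_of_le hρmin hρ
  have hεα : ε < (⨅ j, α j) / (2 * ρmax) := (lt_min_iff.1 hε0).2
  have hαminpos : 0 < ⨅ j, α j := by
    have h2 : 0 < (⨅ j, α j) / (2 * ρmax) := hε.trans hεα
    by_contra h
    push_neg at h
    have h3 : (⨅ j, α j) / (2 * ρmax) ≤ 0 :=
      div_nonpos_of_nonpos_of_nonneg h (by linarith)
    linarith
  have hinf_le : ∀ i, (⨅ j, α j) ≤ α i := fun i =>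
    ciInf_le (Set.finite_range α).bddBelow i
  have key : ∀ i : Fin N, ∃ d : ℝ,
      HasDerivAt (fun t : ℝ => Greg y f t ψ i) d ε ∧
        |d| ≤ 4 * ρmax ^ 2 / (⨅ j, α j) * ε := by
    intro i
    have hψi : (α i / (2 * ρmax)) ^ 2 ≤ ψ i :=
      psi_lb hce hfm hf0 hsupp hρmin hρ hbd y α ψ hα hε hm i
    have hψ0i : (0:ℝ) ≤ ψ i := le_trans (sq_nonneg _) hψi
    have hfrac_pos : 0 < α i / (2 * ρmax) := div_pos (hα i) (by linarith)
    have hψ2 : (⨅ j, α j) / (2 * ρmax) ≤ Real.sqrt (ψ i) := by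
      have h1 : α i / (2 * ρmax) ≤ Real.sqrt (ψ i) := by
        have h := Real.sqrt_le_sqrt hψi
        rwa [Real.sqrt_sq hfrac_pos.le] at h
      have h2 : (⨅ j, α j) / (2 * ρmax) ≤ α i / (2 * ρmax) :=
        div_le_div_of_nonneg_right' (hinf_le i) (by linarith)
      linarith
    have hψ1 : ε ^ 2 < ψ i := by
      have h3 : ε < Real.sqrt (ψ i) := lt_of_lt_of_le hεα hψ2
      have h4 : ε ^ 2 < Real.sqrt (ψ i) ^ 2 := by nlinarith
      rwa [Real.sq_sqrt hψ0i] at h4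
    exact key_deriv hce hfm hf0 hsupp hρmin hρ hbd y ψ i hε hαminpos hψ1 hψ2
  choose d hd1 hd2 using key
  refine ⟨fun i => -d i, fun i => by simpa using hd1 i, ?_⟩
  have hM0 : 0 ≤ 4 * ρmax ^ 2 / (⨅ j, α j) * ε :=
    mul_nonneg (div_nonneg (by positivity) hαminpos.le) hε.le
  have hsum : ∑ i, (-d i) ^ 2 ≤ (N : ℝ) * (4 * ρmax ^ 2 / (⨅ j, α j) * ε) ^ 2 := by
    have h1 : ∀ i : Fin N, (-d i) ^ 2 ≤ (4 * ρmax ^ 2 / (⨅ j, α j) * ε) ^ 2 := by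
      intro i
      rw [neg_sq, ← sq_abs]
      exact pow_le_pow_left₀ (abs_nonneg _) (hd2 i) 2
    calc ∑ i, (-d i) ^ 2 ≤ ∑ _i : Fin N, (4 * ρmax ^ 2 / (⨅ j, α j) * ε) ^ 2 :=
          Finset.sum_le_sum fun i _ => h1 i
      _ = (N : ℝ) * (4 * ρmax ^ 2 / (⨅ j, α j) * ε) ^ 2 := by
          rw [Finset.sum_const, Finset.card_univ, Fintype.card_fin, nsmul_eq_mul]
  calc Real.sqrt (∑ i, (-d i) ^ 2)
      ≤ Real.sqrt ((N : ℝ) * (4 * ρmax ^ 2 / (⨅ j, α j) * ε) ^ 2) :=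
        Real.sqrt_le_sqrt hsum
    _ = 4 * ρmax ^ 2 / (⨅ j, α j) * Real.sqrt (N : ℝ) * ε := by
        rw [Real.sqrt_mul (Nat.cast_nonneg N), Real.sqrt_sq hM0]
        ring
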